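/- Let m and n be nonnegative integers with n > 0, let x_0, ..., x_{n-1} be the positive zeros of P̄^m_{m+2n}, and let ρ_0, ..., ρ_{n-1} be the corresponding Gauss–Jacobi quadrature weights. Then the n × n real matrix U with entries U_{ij} = sqrt(ρ_i) · P̄^m_{m+2j}(x_i), for 0 ≤ i, j ≤ n-1, is orthogonal (i.e., U^T U = I). -/

import Mathlib

open scoped Nat Matrix

/-- The Legendre polynomial of degree `l`, via Rodrigues' formula. -/
noncomputable def legendreP (l : ℕ) : ℝ → ℝ := fun x =>
  (1 / (2 ^ l * (l ! : ℝ))) * iteratedDeriv l (fun y : ℝ => (y ^ 2 - 1) ^ l) x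

/-- The normalized associated Legendre function `P̄_l^m`. -/
noncomputable def nalf (m l : ℕ) : ℝ → ℝ := fun x =>
  Real.sqrt ((2 * l + 1) / 2 * ((l - m)! : ℝ) / ((l + m)! : ℝ)) *
    (1 - x ^ 2) ^ ((m : ℝ) / 2) * iteratedDeriv m (legendreP l) x

/-- The spectral (l²-operator) norm of a real matrix. -/
noncomputable def specNorm {α β : Type*} [Fintype α] [Fintype β] [DecidableEq α] [DecidableEq β]
    (A : Matrix α β ℝ) : ℝ :=
  ‖LinearMap.toContinuousLinearMap (Matrix.toEuclideanLin A)‖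

/-- The singular values of a real matrix, listed in decreasing order. -/
noncomputable def singularValues {p q : ℕ} (A : Matrix (Fin p) (Fin q) ℝ) : List ℝ :=
  List.insertionSort (· ≥ ·)
    (List.ofFn fun i => Real.sqrt ((show (Aᵀ * A).IsHermitian by
      simpa [Matrix.conjTranspose_eq_transpose_of_trivial] using Matrix.isHermitian_conjTranspose_mul_self A).eigenvalues i))

noncomputable def ccoef (m l : ℕ) : ℝ :=
  Real.sqrt ((((l : ℝ) - m + 1) * ((l : ℝ) - m + 2) * ((l : ℝ) + m + 1) * ((l : ℝ) + m + 2)) /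
    ((2 * (l : ℝ) + 1) * (2 * (l : ℝ) + 3) ^ 2 * (2 * (l : ℝ) + 5)))

noncomputable def dcoef (m l : ℕ) : ℝ :=
  (2 * (l : ℝ) * ((l : ℝ) + 1) - 2 * (m : ℝ) ^ 2 - 1) /
    ((2 * (l : ℝ) - 1) * (2 * (l : ℝ) + 3))

namespace GaussLeg

open Polynomial


lemma dd (k : ℕ) (p : Polynomial ℝ) :
    derivative^[k] (derivative p) = derivative^[k + 1] p :=
  (Function.iterate_succ_apply _ k p).symm

lemma dd' (k : ℕ) (p : Polynomial ℝ) :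
    derivative^[k + 1] p = derivative^[k] (derivative p) :=
  Function.iterate_succ_apply _ k p

lemma idd_add (k : ℕ) (p q : Polynomial ℝ) :
    derivative^[k] (p + q) = derivative^[k] p + derivative^[k] q := by
  induction k generalizing p q with
  | zero => rfl
  | succ k ih => rw [dd', derivative_add, ih, dd, dd]

lemma idd_Cmul (k : ℕ) (a : ℝ) (p : Polynomial ℝ) :
    derivative^[k] (C a * p) = C a * derivative^[k] p := by
  induction k generalizing p with
  | zero => rfl
  | succ k ih => rw [dd', derivative_C_mul, ih, dd]

lemma iter_deriv_X_mul (k : ℕ) (p : Polynomial ℝ) :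
    derivative^[k + 1] (X * p) =
      X * derivative^[k + 1] p + C ((k : ℝ) + 1) * derivative^[k] p := by
  induction k generalizing p with
  | zero => simp [derivative_mul]; ring
  | succ k ih =>
    rw [dd' (k + 1), derivative_mul, derivative_X, one_mul, idd_add, ih (derivative p),
      dd, dd]
    push_cast
    simp only [map_add, map_mul, map_pow, map_one, map_zero, map_ofNat, Function.iterate_one]
    ring

lemma deriv_sq_mul (p : Polynomial ℝ) :
    derivative ((X ^ 2 - 1) * p) = (X ^ 2 - 1) * derivative p + C 2 * (X * p) := by
  simp [derivative_mul, derivative_pow]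
  ring

lemma iter_deriv_sq_mul (k : ℕ) (p : Polynomial ℝ) :
    derivative^[k + 2] ((X ^ 2 - 1) * p) =
      (X ^ 2 - 1) * derivative^[k + 2] p + C (2 * ((k : ℝ) + 2)) * (X * derivative^[k + 1] p)
        + C (((k : ℝ) + 1) * ((k : ℝ) + 2)) * derivative^[k] p := by
  induction k generalizing p with
  | zero =>
    show derivative^[1 + 1] _ = _
    rw [dd' 1, deriv_sq_mul, idd_add, idd_Cmul, dd' 0, deriv_sq_mul,
      dd' 0, derivative_mul, derivative_X, one_mul]
    show _ = _ * derivative^[1+1] p + _ * (X * derivative^[0+1] p) + _ * derivative^[0] p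
    rw [dd' 1, dd' 0]
    simp only [Function.iterate_zero, Function.iterate_one, id_eq]
    push_cast
    simp only [map_add, map_mul, map_pow, map_one, map_zero, map_ofNat, Function.iterate_one]
    ring
  | succ k ih =>
    show derivative^[(k + 2) + 1] _ = _
    rw [dd' (k + 2), deriv_sq_mul, idd_add, idd_Cmul, ih (derivative p)]
    have h2 : derivative^[k + 2] (X * p)
        = X * derivative^[k + 2] p + C ((k : ℝ) + 1 + 1) * derivative^[k + 1] p := by
      have := iter_deriv_X_mul (k + 1) p
      push_cast at this ⊢
      convert this using 3 <;> omega
    rw [h2, dd, dd, dd]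
    show _ = _ * derivative^[(k+2)+1] p + _ * (X * derivative^[(k+1)+1] p) + _ * derivative^[k+1] p
    push_cast
    simp only [map_add, map_mul, map_pow, map_one, map_zero, map_ofNat, Function.iterate_one]
    ring


noncomputable def Up (l : ℕ) : Polynomial ℝ := (X ^ 2 - 1) ^ l
noncomputable def Lp (l : ℕ) : Polynomial ℝ := C (1 / (2 ^ l * (l ! : ℝ))) * derivative^[l] (Up l)

lemma ddtop (k : ℕ) (p : Polynomial ℝ) :
    derivative^[k + 1] p = derivative (derivative^[k] p) :=
  Function.iterate_succ_apply' _ k p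

lemma fc_ne (l : ℕ) : ((2 : ℝ) ^ l * (l ! : ℝ)) ≠ 0 := by
  have := Nat.factorial_pos l
  positivity

lemma idd_U (l : ℕ) : derivative^[l] (Up l) = C ((2 : ℝ) ^ l * (l ! : ℝ)) * Lp l := by
  rw [Lp, ← mul_assoc, ← C_mul, mul_one_div, div_self (fc_ne l), C_1, one_mul]

lemma hU (l : ℕ) :
    derivative (Up (l + 1)) = C (2 * ((l : ℝ) + 1)) * (X * Up l) := by
  rw [Up, Up, derivative_pow]
  have : derivative (X ^ 2 - 1 : Polynomial ℝ) = 2 * X := by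
    simp [derivative_pow, Polynomial.C_eq_natCast, map_ofNat]
  rw [this]
  push_cast
  simp only [map_add, map_mul, map_pow, map_one, map_zero, map_ofNat]
  ring

lemma starL (s : ℕ) :
    (X ^ 2 - 1) * derivative^[s + 2] (Up (s + 1)) =
      C (((s : ℝ) + 1) * ((s : ℝ) + 2)) * derivative^[s] (Up (s + 1)) := by
  have base : (X ^ 2 - 1) * derivative (Up (s + 1)) = C (2 * ((s : ℝ) + 1)) * (X * Up (s + 1)) := by
    rw [hU, Up, Up]
    simp only [map_add, map_mul, map_pow, map_one, map_zero, map_ofNat]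
    ring
  have h := congrArg (derivative^[s + 1]) base
  rw [idd_Cmul, iter_deriv_X_mul s] at h
  -- LHS of h : derivative^[s+1] ((X^2-1) * derivative (Up (s+1)))
  rcases s with _ | t
  · show (X ^ 2 - 1) * derivative (derivative (Up 1)) =
        C ((((0:ℕ):ℝ) + 1) * (((0:ℕ):ℝ) + 2)) * (Up 1)
    have h1 : derivative (Up 1) = 2 * X := by
      simp [Up, derivative_pow, Polynomial.C_eq_natCast, map_ofNat]
    rw [h1]
    have h2 : derivative (2 * X : Polynomial ℝ) = 2 := by simp
    rw [h2, Up]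
    simp only [Nat.cast_zero, map_add, map_mul, map_pow, map_one, map_zero, map_ofNat, pow_one]
    ring
  · -- s = t+1
    rw [show (t + 1 + 1 : ℕ) = t + 2 from rfl] at h
    rw [iter_deriv_sq_mul t] at h
    rw [dd, dd, dd] at h
    push_cast at h ⊢
    rw [show (t + 1 + 2 : ℕ) = t + 2 + 1 from rfl] at h
    rw [show (t + 1 + 1 : ℕ) = t + 2 from rfl] at h ⊢
    rw [show (t + 1 + 2 : ℕ) = t + 2 + 1 from rfl]
    simp only [map_add, map_mul, map_pow, map_one, map_zero, map_ofNat] at h ⊢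
    linear_combination h

lemma C_ne (l : ℕ) : (C ((2 : ℝ) ^ l * (l ! : ℝ)) : Polynomial ℝ) ≠ 0 := by
  rw [Ne, Polynomial.C_eq_zero]
  exact fc_ne l

lemma ID1 (l : ℕ) :
    derivative (Lp (l + 1)) = C ((l : ℝ) + 1) * Lp l + X * derivative (Lp l) := by
  have h := congrArg (derivative^[l + 1]) (hU l)
  rw [idd_Cmul, iter_deriv_X_mul l, dd] at h
  -- h : derivative^[l+1+1] (Up (l+1)) = C(2(l+1)) * (X * d^[l+1](Up l) + C(l+1) d^[l](Up l))
  rw [ddtop (l+1), idd_U (l+1)] at h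
  rw [ddtop l, idd_U l] at h
  rw [derivative_C_mul, derivative_C_mul] at h
  apply mul_left_cancel₀ (C_ne (l+1))
  rw [h]
  simp only [Nat.factorial_succ, pow_succ]
  push_cast
  simp only [map_add, map_mul, map_pow, map_one, map_zero, map_ofNat]
  ring

lemma Lp_zero : Lp 0 = 1 := by
  simp [Lp, Up]

lemma Lp_one : Lp 1 = X := by
  have h : derivative^[1] (Up 1) = C 2 * X := by
    show derivative (Up 1) = _
    simp [Up, derivative_pow, Polynomial.C_eq_natCast, map_ofNat]
  rw [Lp, h, ← mul_assoc, ← C_mul]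
  norm_num

lemma ID3 (l : ℕ) :
    C ((l : ℝ) + 1) * Lp (l + 1) = C ((l : ℝ) + 1) * (X * Lp l) + (X ^ 2 - 1) * derivative (Lp l) := by
  rcases l with _ | s
  · rw [Lp_zero, Lp_one]
    simp
  · -- l = s+1
    have h := congrArg (derivative^[s + 1]) (hU (s + 1))
    rw [idd_Cmul, iter_deriv_X_mul s] at h
    -- h : d^[s+1] (d (Up (s+2))) = C(2(s+2)) * (X * d^[s+1](Up (s+1)) + C(s+1) d^[s](Up (s+1)))
    rw [dd] at h
    rw [show (s+1+1:ℕ) = s+2 from rfl] at h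
    have h2 := starL s
    have h3 := congrArg (fun q => C (((s:ℝ) + 2)) * q) h
    rw [idd_U (s+2), idd_U (s+1)] at h3
    rw [ddtop (s+1), idd_U (s+1), derivative_C_mul] at h2
    apply mul_left_cancel₀ (C_ne (s+2))
    simp only [Nat.factorial_succ, pow_succ] at h2 h3 ⊢
    push_cast at h2 h3 ⊢
    simp only [map_add, map_mul, map_pow, map_one, map_zero, map_ofNat] at h2 h3 ⊢
    linear_combination h3 - (2 * (C (s:ℝ) + 2) : Polynomial ℝ) * h2

lemma G2base (l : ℕ) :
    (X ^ 2 - 1) * derivative (Lp (l + 1)) = C ((l : ℝ) + 1) * (X * Lp (l + 1) - Lp l) := by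
  linear_combination (X ^ 2 - 1 : Polynomial ℝ) * ID1 l - X * ID3 l

lemma L1b (l : ℕ) :
    C (2 * (l : ℝ) + 3) * (X * Lp (l + 1)) = C ((l : ℝ) + 2) * Lp (l + 2) + C ((l : ℝ) + 1) * Lp l := by
  have h1 := ID3 (l + 1)
  have h2 := G2base l
  push_cast at h1
  simp only [map_add, map_mul, map_ofNat, map_one, map_sub] at h1 h2 ⊢
  linear_combination (-1 : Polynomial ℝ) * h1 - h2

lemma L4 (l : ℕ) :
    X * derivative (Lp (l + 1)) - derivative (Lp l) = C ((l : ℝ) + 1) * Lp (l + 1) := by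
  rcases l with _ | s
  · rw [Lp_zero, Lp_one]
    simp
  · have h1 := ID1 (s + 1)
    have h2 := G2base s
    have h3 := L1b s
    push_cast at h1 h2 h3 ⊢
    simp only [map_add, map_mul, map_ofNat, map_one, map_sub] at h1 h2 h3 ⊢
    linear_combination X * h1 + h2 + h3

lemma L2 (l : ℕ) :
    derivative (Lp (l + 2)) - derivative (Lp l) = C (2 * (l : ℝ) + 3) * Lp (l + 1) := by
  have h1 := ID1 (l + 1)
  have h2 := L4 l
  push_cast at h1 h2 ⊢
  simp only [map_add, map_mul, map_ofNat, map_one, map_sub] at h1 h2 ⊢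
  linear_combination h1 + h2

noncomputable def g (m l : ℕ) : Polynomial ℝ := derivative^[m] (Lp l)

lemma idd_sub (k : ℕ) (p q : Polynomial ℝ) :
    derivative^[k] (p - q) = derivative^[k] p - derivative^[k] q := by
  induction k generalizing p q with
  | zero => rfl
  | succ k ih => rw [dd', derivative_sub, ih, dd, dd]

lemma g_succ (m l : ℕ) : g (m + 1) l = derivative^[m] (derivative (Lp l)) := by
  rw [g, dd]

lemma g_deriv (m l : ℕ) : derivative (g m l) = g (m + 1) l := by
  rw [g, g, ← ddtop]

lemma G3 (m l : ℕ) :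
    g (m + 1) (l + 2) - g (m + 1) l = C (2 * (l : ℝ) + 3) * g m (l + 1) := by
  have h := congrArg (derivative^[m]) (L2 l)
  rw [idd_sub, idd_Cmul] at h
  rw [g_succ, g_succ, g]
  exact h

lemma G4 (m l : ℕ) :
    X * g (m + 1) (l + 1) - g (m + 1) l = C ((l : ℝ) + 1 - (m : ℝ)) * g m (l + 1) := by
  induction m with
  | zero =>
    have := L4 l
    simp only [Nat.cast_zero, sub_zero]
    rw [g_succ, g_succ, g]
    simpa using this
  | succ m ih =>
    have h := congrArg derivative ih
    rw [derivative_sub, derivative_mul, derivative_X, one_mul, derivative_C_mul,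
      g_deriv, g_deriv, g_deriv] at h
    push_cast at h ⊢
    simp only [map_add, map_mul, map_ofNat, map_one, map_sub] at h ⊢
    linear_combination h

lemma G1 (m l : ℕ) :
    C (2 * (l : ℝ) + 3) * (X * g m (l + 1)) =
      C ((l : ℝ) + 2 - (m : ℝ)) * g m (l + 2) + C ((l : ℝ) + 1 + (m : ℝ)) * g m l := by
  induction m with
  | zero =>
    have := L1b l
    simp only [Nat.cast_zero, sub_zero, add_zero]
    rw [g, g, g]
    simpa using this
  | succ m ih =>
    have h := congrArg derivative ih
    rw [derivative_C_mul, derivative_mul, derivative_X, one_mul, derivative_add,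
      derivative_C_mul, derivative_C_mul, g_deriv, g_deriv, g_deriv] at h
    have h3 := G3 m l
    push_cast at h h3 ⊢
    simp only [map_add, map_mul, map_ofNat, map_one, map_sub] at h h3 ⊢
    linear_combination h + h3

lemma G2m (m l : ℕ) :
    (1 - X ^ 2) * g (m + 1) (l + 1) =
      C ((l : ℝ) + 1 + (m : ℝ)) * g m l - C ((l : ℝ) + 1 - (m : ℝ)) * (X * g m (l + 1)) := by
  induction m with
  | zero =>
    have := G2base l
    simp only [Nat.cast_zero, sub_zero, add_zero]
    rw [g_succ, g, g]
    simp only [Function.iterate_zero, id_eq]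
    simp only [map_add, map_mul, map_ofNat, map_one, map_sub] at this ⊢
    linear_combination (-1 : Polynomial ℝ) * this
  | succ m ih =>
    have h := congrArg derivative ih
    simp only [derivative_sub, derivative_mul, derivative_C_mul, derivative_X, derivative_one,
      derivative_X_pow, g_deriv, one_mul] at h
    have h4 := G4 m l
    push_cast at h h4 ⊢
    simp only [map_add, map_mul, map_ofNat, map_one, map_sub, map_zero, derivative_C,
      derivative_one, zero_mul, mul_zero, add_zero, zero_add, sub_zero] at h h4 ⊢
    linear_combination h + h4

lemma natDegree_Lp_le (l : ℕ) : (Lp l).natDegree ≤ l := by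
  refine le_trans (natDegree_C_mul_le _ _) ?_
  refine le_trans (natDegree_iterate_derivative _ _) ?_
  have h1 : (Up l).natDegree ≤ 2 * l := by
    refine le_trans (natDegree_pow_le) ?_
    have : (X ^ 2 - 1 : Polynomial ℝ).natDegree ≤ 2 := by
      refine le_trans (natDegree_sub_le _ _) ?_
      simp
    nlinarith
  omega

lemma g_zero_big (m l : ℕ) (h : l < m) : g m l = 0 := by
  apply Polynomial.iterate_derivative_eq_zero
  exact lt_of_le_of_lt (natDegree_Lp_le l) h

lemma g_mm1 (m : ℕ) (h : 1 ≤ m) : g m (m - 1) = 0 := by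
  apply g_zero_big
  omega

lemma RAW0 (m : ℕ) :
    C ((2 * (m:ℝ) + 1) * (2 * (m:ℝ) + 3)) * (X ^ 2 * g m m) =
      C 2 * g m (m + 2) + C (2 * (m:ℝ) + 1) * g m m := by
  have hB : C (2 * (m:ℝ) + 1) * (X * g m m) = C 1 * g m (m + 1) := by
    rcases m with _ | t
    · show C (2 * ((0:ℕ):ℝ) + 1) * (X * g 0 0) = C 1 * g 0 1
      rw [g, g]
      show C (2 * ((0:ℕ):ℝ) + 1) * (X * Lp 0) = C 1 * Lp 1
      rw [Lp_zero, Lp_one]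
      norm_num
    · have h := G1 (t + 1) t
      have h0 : g (t + 1) t = 0 := g_zero_big _ _ (by omega)
      push_cast at h ⊢
      rw [h0] at h
      simp only [map_add, map_mul, map_ofNat, map_one, map_sub, map_zero] at h ⊢
      linear_combination h
  have hC := G1 m m
  push_cast at hB hC ⊢
  simp only [map_add, map_mul, map_ofNat, map_one, map_sub, map_zero] at hB hC ⊢
  linear_combination (2 * (C (m:ℝ)) + 3) * X * hB + hC

-- raw x^2-recurrence centered at c = m+2j+2
lemma RAWS (m j : ℕ) :
    C ((2*((m:ℝ)+2*j)+3) * (2*((m:ℝ)+2*j)+5) * (2*((m:ℝ)+2*j)+7)) * (X ^ 2 * g m (m+2*j+2)) =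
      C ((2*(j:ℝ)+3) * (2*(j:ℝ)+4) * (2*((m:ℝ)+2*j)+3)) * g m (m+2*j+4) +
      C ((2*(j:ℝ)+3) * (2*(m:ℝ)+2*(j:ℝ)+3) * (2*((m:ℝ)+2*j)+3)
          + (2*(m:ℝ)+2*j+2) * (2*(j:ℝ)+2) * (2*((m:ℝ)+2*j)+7)) * g m (m+2*j+2) +
      C ((2*(m:ℝ)+2*j+2) * (2*(m:ℝ)+2*j+1) * (2*((m:ℝ)+2*j)+7)) * g m (m+2*j) := by
  have hA := G1 m (m+2*j)
  have hB := G1 m (m+2*j+1)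
  have hC := G1 m (m+2*j+2)
  rw [show (m+2*j+1+1 : ℕ) = m+2*j+2 from rfl] at hB
  rw [show (m+2*j+1+2 : ℕ) = m+2*j+3 from rfl] at hB
  rw [show (m+2*j+2+1 : ℕ) = m+2*j+3 from rfl] at hC
  rw [show (m+2*j+2+2 : ℕ) = m+2*j+4 from rfl] at hC
  push_cast at hA hB hC ⊢
  simp only [map_add, map_mul, map_ofNat, map_one, map_sub, map_zero] at hA hB hC ⊢
  linear_combination (2*(C (m:ℝ)+2*C (j:ℝ))+3) * (2*(C (m:ℝ)+2*C (j:ℝ))+7) * X * hB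
    + (2*C (j:ℝ)+3) * (2*(C (m:ℝ)+2*C (j:ℝ))+3) * hC
    + (2*C (m:ℝ)+2*C (j:ℝ)+2) * (2*(C (m:ℝ)+2*C (j:ℝ))+7) * hA

-- raw derivative identity centered at c = m+2j+2
lemma RAWB (m j : ℕ) :
    C (2*((m:ℝ)+2*j)+3) * (X * ((1 - X^2) * g (m+1) (m+2*j+2))) =
      C ((2*(m:ℝ)+2*j+2)*(2*(m:ℝ)+2*j+1)) * g m (m+2*j) +
      (C ((2*(m:ℝ)+2*j+2)*(2*(j:ℝ)+2)) - C ((2*((m:ℝ)+2*j)+3)*(2*(j:ℝ)+2)) * X^2)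
        * g m (m+2*j+2) := by
  have hA := G1 m (m+2*j)
  have hG := G2m m (m+2*j+1)
  rw [show (m+2*j+1+1 : ℕ) = m+2*j+2 from rfl] at hG
  push_cast at hA hG ⊢
  simp only [map_add, map_mul, map_ofNat, map_one, map_sub, map_zero] at hA hG ⊢
  linear_combination (2*(C (m:ℝ)+2*C (j:ℝ))+3) * X * hG
    + (2*C (m:ℝ)+2*C (j:ℝ)+2) * hA

noncomputable def NN (m l : ℕ) : ℝ :=
  Real.sqrt ((2 * l + 1) / 2 * ((l - m)! : ℝ) / ((l + m)! : ℝ))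

lemma factexp (k : ℕ) : ((k+2)! : ℝ) = ((k:ℝ)+2)*((k:ℝ)+1)*(k ! : ℝ) := by
  rw [show k+2 = (k+1)+1 from rfl, Nat.factorial_succ, Nat.factorial_succ]
  push_cast
  ring

lemma NN_eq (m j : ℕ) : NN m (m+2*j)
    = Real.sqrt ((2*((m:ℝ)+2*j)+1)/2 * ((2*j)! : ℝ) / ((2*m+2*j)! : ℝ)) := by
  rw [NN, show m+2*j-m = 2*j by omega, show m+2*j+m = 2*m+2*j by omega]
  congr 2
  push_cast
  ring

lemma ccoef_eq (m j : ℕ) : ccoef m (m+2*j)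
    = Real.sqrt (((2*(j:ℝ)+1)*(2*(j:ℝ)+2)*(2*(m:ℝ)+2*j+1)*(2*(m:ℝ)+2*j+2)) /
        ((2*((m:ℝ)+2*j)+1)*(2*((m:ℝ)+2*j)+3)^2*(2*((m:ℝ)+2*j)+5))) := by
  rw [ccoef]
  congr 1
  push_cast
  ring

lemma key1 (m j : ℕ) :
    NN m (m+2*j) * ((2*(j:ℝ)+1) * (2*(j:ℝ)+2) / ((2*((m:ℝ)+2*j)+1) * (2*((m:ℝ)+2*j)+3)))
      = ccoef m (m+2*j) * NN m (m+2*j+2) := by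
  have hfj : (0:ℝ) < ((2*j)! : ℝ) := by exact_mod_cast Nat.factorial_pos _
  have hfm : (0:ℝ) < ((2*m+2*j)! : ℝ) := by exact_mod_cast Nat.factorial_pos _
  rw [NN_eq m j, ccoef_eq m j, show m+2*j+2 = m+2*(j+1) from by omega, NN_eq m (j+1)]
  rw [show (2*(j+1))! = (2*j+2)! from by norm_num [Nat.mul_add], factexp (2*j),
    show (2*m+2*(j+1))! = (2*m+2*j+2)! from by ring_nf, factexp (2*m+2*j)]
  have hq : (0:ℝ) ≤ (2*(j:ℝ)+1) * (2*(j:ℝ)+2) / ((2*((m:ℝ)+2*j)+1) * (2*((m:ℝ)+2*j)+3)) := by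
    positivity
  rw [← Real.sqrt_sq hq, ← Real.sqrt_mul (by positivity), ← Real.sqrt_mul (by positivity)]
  congr 1
  push_cast
  field_simp
  ring

lemma key2 (m j : ℕ) :
    NN m (m+2*j+2) * ((2*(m:ℝ)+2*j+2) * (2*(m:ℝ)+2*j+1) / ((2*((m:ℝ)+2*j)+5) * (2*((m:ℝ)+2*j)+3)))
      = ccoef m (m+2*j) * NN m (m+2*j) := by
  have hfj : (0:ℝ) < ((2*j)! : ℝ) := by exact_mod_cast Nat.factorial_pos _
  have hfm : (0:ℝ) < ((2*m+2*j)! : ℝ) := by exact_mod_cast Nat.factorial_pos _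
  rw [show m+2*j+2 = m+2*(j+1) from by omega, NN_eq m (j+1), NN_eq m j, ccoef_eq m j]
  rw [show (2*(j+1))! = (2*j+2)! from by norm_num [Nat.mul_add], factexp (2*j),
    show (2*m+2*(j+1))! = (2*m+2*j+2)! from by ring_nf, factexp (2*m+2*j)]
  have hq : (0:ℝ) ≤ (2*(m:ℝ)+2*j+2) * (2*(m:ℝ)+2*j+1) / ((2*((m:ℝ)+2*j)+5) * (2*((m:ℝ)+2*j)+3)) := by
    positivity
  rw [← Real.sqrt_sq hq, ← Real.sqrt_mul (by positivity), ← Real.sqrt_mul (by positivity)]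
  congr 1
  push_cast
  field_simp
  ring

noncomputable def F (m j : ℕ) (x : ℝ) : ℝ := NN m (m+2*j) * (g m (m+2*j)).eval x
noncomputable def F' (m j : ℕ) (x : ℝ) : ℝ := NN m (m+2*j) * (g (m+1) (m+2*j)).eval x

lemma dc0 (m : ℕ) : dcoef m m = 1/(2*(m:ℝ)+3) := by
  have h : (2*(m:ℝ)-1) ≠ 0 := by
    rcases Nat.eq_zero_or_pos m with h | h
    · subst h; norm_num
    · have : (1:ℝ) ≤ (m:ℝ) := by exact_mod_cast h
      nlinarith
  have h2 : (2*(m:ℝ)+3) ≠ 0 := by positivity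
  rw [dcoef, div_eq_div_iff (mul_ne_zero h h2) h2]
  ring

lemma hk1' (m : ℕ) : NN m m * 2 = ccoef m m * NN m (m+2) * ((2*(m:ℝ)+1)*(2*(m:ℝ)+3)) := by
  have hk := key1 m 0
  rw [show m+2*0 = m by omega, show m+2*0+2 = m+2 by omega] at hk
  norm_num at hk
  have h1 : ((2*(m:ℝ)+1)*(2*(m:ℝ)+3)) ≠ 0 := by positivity
  field_simp at hk
  linear_combination hk

lemma REC0 (m : ℕ) (x : ℝ) :
    x^2 * F m 0 x = dcoef m m * F m 0 x + ccoef m m * F m 1 x := by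
  have h := congrArg (fun p => Polynomial.eval x p) (RAW0 m)
  simp only [eval_mul, eval_add, eval_C, eval_pow, eval_X, eval_ofNat] at h
  have hd : dcoef m m * (2*(m:ℝ)+3) = 1 := by
    rw [dc0]; field_simp
  have hk' := hk1' m
  simp only [F]
  rw [show m+2*0 = m by omega, show m+2*1 = m+2 by omega]
  apply mul_left_cancel₀ (a := (2*(m:ℝ)+1)*(2*(m:ℝ)+3)) (by positivity)
  linear_combination NN m m * h + Polynomial.eval x (g m (m+2)) * hk'
    - (2*(m:ℝ)+1) * NN m m * Polynomial.eval x (g m m) * hd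

lemma REC0' (m : ℕ) (x : ℝ) :
    2*x * F m 0 x + x^2 * F' m 0 x = dcoef m m * F' m 0 x + ccoef m m * F' m 1 x := by
  have h0 := congrArg derivative (RAW0 m)
  simp only [derivative_C_mul, derivative_add, derivative_mul, derivative_X_pow, derivative_C,
    zero_mul, add_zero, zero_add, mul_zero, g_deriv] at h0
  have h := congrArg (fun p => Polynomial.eval x p) h0
  simp only [eval_mul, eval_add, eval_C, eval_pow, eval_X, eval_ofNat, eval_natCast] at h
  have hd : dcoef m m * (2*(m:ℝ)+3) = 1 := by
    rw [dc0]; field_simp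
  have hk' := hk1' m
  simp only [F, F']
  rw [show m+2*0 = m by omega, show m+2*1 = m+2 by omega]
  apply mul_left_cancel₀ (a := (2*(m:ℝ)+1)*(2*(m:ℝ)+3)) (by positivity)
  linear_combination NN m m * h + Polynomial.eval x (g (m+1) (m+2)) * hk'
    - (2*(m:ℝ)+1) * NN m m * Polynomial.eval x (g (m+1) m) * hd


lemma hk1c (m j : ℕ) : ccoef m (m+2*j+2) * NN m (m+2*j+4) * ((2*((m:ℝ)+2*j)+5)*(2*((m:ℝ)+2*j)+7))
    = NN m (m+2*j+2) * ((2*(j:ℝ)+3)*(2*(j:ℝ)+4)) := by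
  have hk := key1 m (j+1)
  rw [show m+2*(j+1) = m+2*j+2 by omega, show m+2*j+2+2 = m+2*j+4 by omega] at hk
  push_cast at hk
  have h1 : ((2*((m:ℝ)+2*j)+5)*(2*((m:ℝ)+2*j)+7)) ≠ 0 := by positivity
  rw [show (2*((m:ℝ)+2*((j:ℝ)+1))+1) = 2*((m:ℝ)+2*(j:ℝ))+5 by ring,
    show (2*((m:ℝ)+2*((j:ℝ)+1))+3) = 2*((m:ℝ)+2*(j:ℝ))+7 by ring] at hk
  field_simp at hk
  linear_combination -hk

lemma hk2c (m j : ℕ) : ccoef m (m+2*j) * NN m (m+2*j) * ((2*((m:ℝ)+2*j)+3)*(2*((m:ℝ)+2*j)+5))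
    = NN m (m+2*j+2) * ((2*(m:ℝ)+2*j+2)*(2*(m:ℝ)+2*j+1)) := by
  have hk := key2 m j
  have h1 : ((2*((m:ℝ)+2*j)+3)*(2*((m:ℝ)+2*j)+5)) ≠ 0 := by positivity
  field_simp at hk
  linear_combination -hk

lemma hdc (m j : ℕ) : dcoef m (m+2*j+2) * ((2*((m:ℝ)+2*j)+3) * (2*((m:ℝ)+2*j)+7))
    = 2*((m:ℝ)+2*j+2)*((m:ℝ)+2*j+3) - 2*(m:ℝ)^2 - 1 := by
  rw [dcoef]
  push_cast
  have h1 : (2*((m:ℝ)+2*j+2)-1) = 2*((m:ℝ)+2*j)+3 := by ring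
  have h2 : (2*((m:ℝ)+2*j+2)+3) = 2*((m:ℝ)+2*j)+7 := by ring
  rw [h1, h2]
  have h3 : ((2*((m:ℝ)+2*j)+3) * (2*((m:ℝ)+2*j)+7)) ≠ 0 := by positivity
  field_simp
  ring

lemma RECS (m j : ℕ) (x : ℝ) :
    x^2 * F m (j+1) x = ccoef m (m+2*j) * F m j x + dcoef m (m+2*j+2) * F m (j+1) x
      + ccoef m (m+2*j+2) * F m (j+2) x := by
  have h := congrArg (fun p => Polynomial.eval x p) (RAWS m j)
  simp only [eval_mul, eval_add, eval_C, eval_pow, eval_X, eval_ofNat] at h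
  have hk1 := hk1c m j
  have hk2 := hk2c m j
  have hd := hdc m j
  simp only [F]
  rw [show m+2*(j+1) = m+2*j+2 by omega, show m+2*(j+2) = m+2*j+4 by omega]
  apply mul_left_cancel₀
    (a := (2*((m:ℝ)+2*j)+3)*(2*((m:ℝ)+2*j)+5)*(2*((m:ℝ)+2*j)+7)) (by positivity)
  linear_combination NN m (m+2*j+2) * h
    - (2*((m:ℝ)+2*j)+3) * Polynomial.eval x (g m (m+2*j+4)) * hk1
    - (2*((m:ℝ)+2*j)+7) * Polynomial.eval x (g m (m+2*j)) * hk2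
    - (2*((m:ℝ)+2*j)+5) * NN m (m+2*j+2) * Polynomial.eval x (g m (m+2*j+2)) * hd

lemma RECS' (m j : ℕ) (x : ℝ) :
    2*x * F m (j+1) x + x^2 * F' m (j+1) x = ccoef m (m+2*j) * F' m j x
      + dcoef m (m+2*j+2) * F' m (j+1) x + ccoef m (m+2*j+2) * F' m (j+2) x := by
  have h0 := congrArg derivative (RAWS m j)
  simp only [derivative_C_mul, derivative_add, derivative_mul, derivative_X_pow, derivative_C,
    zero_mul, add_zero, zero_add, mul_zero, g_deriv] at h0
  have h := congrArg (fun p => Polynomial.eval x p) h0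
  simp only [eval_mul, eval_add, eval_C, eval_pow, eval_X, eval_ofNat, eval_natCast] at h
  have hk1 := hk1c m j
  have hk2 := hk2c m j
  have hd := hdc m j
  simp only [F, F']
  rw [show m+2*(j+1) = m+2*j+2 by omega, show m+2*(j+2) = m+2*j+4 by omega]
  apply mul_left_cancel₀
    (a := (2*((m:ℝ)+2*j)+3)*(2*((m:ℝ)+2*j)+5)*(2*((m:ℝ)+2*j)+7)) (by positivity)
  linear_combination NN m (m+2*j+2) * h
    - (2*((m:ℝ)+2*j)+3) * Polynomial.eval x (g (m+1) (m+2*j+4)) * hk1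
    - (2*((m:ℝ)+2*j)+7) * Polynomial.eval x (g (m+1) (m+2*j)) * hk2
    - (2*((m:ℝ)+2*j)+5) * NN m (m+2*j+2) * Polynomial.eval x (g (m+1) (m+2*j+2)) * hd

lemma BPe (m j : ℕ) (x : ℝ) (hx : F m (j+1) x = 0) :
    x*(1-x^2) * F' m (j+1) x
      = (2*(m:ℝ)+4*(j:ℝ)+5) * ccoef m (m+2*j) * F m j x := by
  have h := congrArg (fun p => Polynomial.eval x p) (RAWB m j)
  simp only [eval_mul, eval_add, eval_sub, eval_one, eval_C, eval_pow, eval_X, eval_ofNat] at h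
  have hk2 := hk2c m j
  have hN : (0:ℝ) < NN m (m+2*j+2) := by
    rw [NN]
    apply Real.sqrt_pos.mpr
    have := Nat.factorial_pos (m+2*j+2-m)
    have := Nat.factorial_pos (m+2*j+2+m)
    positivity
  have hG : Polynomial.eval x (g m (m+2*j+2)) = 0 := by
    have := hx
    simp only [F, show m+2*(j+1) = m+2*j+2 by omega] at this
    rcases mul_eq_zero.mp this with h' | h'
    · exact absurd h' (ne_of_gt hN)
    · exact h'
  rw [hG, mul_zero] at h
  simp only [F, F']
  rw [show m+2*(j+1) = m+2*j+2 by omega]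
  apply mul_left_cancel₀ (a := (2*((m:ℝ)+2*j)+3)) (by positivity)
  linear_combination NN m (m+2*j+2) * h - Polynomial.eval x (g m (m+2*j)) * hk2


lemma CD2 (m N : ℕ) (x y : ℝ) :
    (x^2 - y^2) * (∑ j ∈ Finset.range (N+1), F m j x * F m j y)
      = ccoef m (m+2*N) * (F m (N+1) x * F m N y - F m N x * F m (N+1) y) := by
  induction N with
  | zero =>
    rw [Finset.sum_range_one, show m+2*0 = m by omega]
    linear_combination F m 0 y * REC0 m x - F m 0 x * REC0 m y
  | succ N ih =>
    rw [Finset.sum_range_succ, show m+2*(N+1) = m+2*N+2 by omega]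
    linear_combination ih + F m (N+1) y * RECS m N x - F m (N+1) x * RECS m N y

lemma CDc (m N : ℕ) (x : ℝ) :
    2*x * (∑ j ∈ Finset.range (N+1), F m j x ^ 2)
      = ccoef m (m+2*N) * (F' m (N+1) x * F m N x - F m (N+1) x * F' m N x) := by
  induction N with
  | zero =>
    rw [Finset.sum_range_one, show m+2*0 = m by omega]
    linear_combination F m 0 x * REC0' m x - F' m 0 x * REC0 m x
  | succ N ih =>
    rw [Finset.sum_range_succ, show m+2*(N+1) = m+2*N+2 by omega]
    linear_combination ih + F m (N+1) x * RECS' m N x - F' m (N+1) x * RECS m N x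

lemma NN_pos (m l : ℕ) : 0 < NN m l := by
  rw [NN]
  apply Real.sqrt_pos.mpr
  have h1 : (0:ℝ) < ((l-m)! : ℝ) := by exact_mod_cast Nat.factorial_pos _
  have h2 : (0:ℝ) < ((l+m)! : ℝ) := by exact_mod_cast Nat.factorial_pos _
  positivity

lemma descFactorial_pos' (n k : ℕ) (h : k ≤ n) : 0 < n.descFactorial k := by
  induction k with
  | zero => simp
  | succ k ih =>
    rw [Nat.descFactorial_succ]
    exact Nat.mul_pos (by omega) (ih (by omega))

lemma Up_coeff (m : ℕ) : (Up m).coeff (2*m) = 1 := by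
  have h : (X^2 - 1 : Polynomial ℝ).Monic := by
    have := Polynomial.monic_X_pow_sub_C (1:ℝ) (n := 2) (by norm_num)
    simpa using this
  have hd : (X^2 - 1 : Polynomial ℝ).natDegree = 2 := by
    have := Polynomial.natDegree_X_pow_sub_C (R := ℝ) (n := 2) (r := 1)
    simpa using this
  have h1 : (Up m).natDegree = 2*m := by
    rw [Up, Polynomial.Monic.natDegree_pow h, hd]
    ring
  have h2 : (Up m).leadingCoeff = 1 := Polynomial.Monic.pow h m
  conv_lhs => rw [show (2*m) = (Up m).natDegree from h1.symm]
  exact h2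

lemma gmm_eval (m : ℕ) (x : ℝ) : 0 < Polynomial.eval x (g m m) := by
  have hdeg : (g m m).natDegree ≤ 0 := by
    have h1 := Polynomial.natDegree_iterate_derivative (Lp m) m
    have h2 := natDegree_Lp_le m
    rw [g]
    omega
  have hC := Polynomial.eq_C_of_natDegree_le_zero hdeg
  rw [hC, Polynomial.eval_C]
  have hc : (g m m).coeff 0 = (m.descFactorial m : ℝ) * ((1/(2^m * (m ! : ℝ))) * (((m+m).descFactorial m : ℕ) : ℝ)) := by
    rw [g, Polynomial.coeff_iterate_derivative, Lp, Polynomial.coeff_C_mul,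
      Polynomial.coeff_iterate_derivative]
    rw [show (0+m) = m from by omega, show (m+m) = 2*m from by omega, Up_coeff]
    simp [smul_eq_mul]
  rw [hc]
  have h1 : 0 < (m.descFactorial m : ℝ) := by
    exact_mod_cast descFactorial_pos' m m (le_refl m)
  have h2 : 0 < (((m+m).descFactorial m : ℕ) : ℝ) := by
    exact_mod_cast descFactorial_pos' (m+m) m (by omega)
  have h3 : (0:ℝ) < (m ! : ℝ) := by exact_mod_cast Nat.factorial_pos m
  positivity


lemma itd (k : ℕ) (p : Polynomial ℝ) :
    iteratedDeriv k (fun y : ℝ => p.eval y) = fun y => (derivative^[k] p).eval y := by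
  induction k generalizing p with
  | zero => simp
  | succ k ih =>
    rw [iteratedDeriv_succ']
    have h : deriv (fun y : ℝ => p.eval y) = fun y => (derivative p).eval y := by
      funext y
      exact Polynomial.deriv (p := p) (x := y)
    rw [h, ih, _root_.funext fun y => congrArg (Polynomial.eval y) (dd k p)]

lemma legendreP_eq (l : ℕ) : legendreP l = fun x => (Lp l).eval x := by
  funext x
  rw [legendreP]
  have h : (fun y : ℝ => (y^2-1)^l) = fun y => (Up l).eval y := by
    funext y
    simp [Up]
  rw [h, itd, Lp]
  simp

lemma nalf_eq (m l : ℕ) (x : ℝ) :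
    nalf m l x = NN m l * (1 - x^2) ^ ((m:ℝ)/2) * (g m l).eval x := by
  rw [nalf, legendreP_eq, itd, NN, g]

lemma nalf_fun (m l : ℕ) :
    nalf m l = fun y => NN m l * ((1 - y^2) ^ ((m:ℝ)/2) * (g m l).eval y) := by
  funext y
  rw [nalf_eq]
  ring

lemma nalf_deriv (m l : ℕ) (x : ℝ) (hx : x ∈ Set.Ioo (0:ℝ) 1)
    (hz : (g m l).eval x = 0) :
    deriv (nalf m l) x = (1 - x^2) ^ ((m:ℝ)/2) * (NN m l * (g (m+1) l).eval x) := by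
  obtain ⟨hx0, hx1⟩ := hx
  have hpos : (0:ℝ) < 1 - x^2 := by nlinarith
  have h1 : HasDerivAt (fun y : ℝ => 1 - y^2) (-(2*x)) x := by
    simpa using ((hasDerivAt_pow 2 x).const_sub 1)
  have h2 : HasDerivAt (fun y : ℝ => (1-y^2) ^ ((m:ℝ)/2))
      (-(2 * x * ((m:ℝ)/2) * (1-x^2) ^ ((m:ℝ)/2 - 1))) x := by
    have := h1.rpow_const (p := (m:ℝ)/2) (Or.inl (ne_of_gt hpos))
    simpa using this
  have h3 : HasDerivAt (fun y : ℝ => (g m l).eval y) ((g (m+1) l).eval x) x := by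
    have := (g m l).hasDerivAt x
    rwa [g_deriv] at this
  have h4 := ((h2.mul h3).const_mul (NN m l))
  rw [nalf_fun]
  simp only [Pi.mul_apply] at h4
  rw [h4.deriv, hz]
  ring


lemma F0_sq_pos (m : ℕ) (y : ℝ) : 0 < F m 0 y ^ 2 := by
  have h : 0 < F m 0 y := by
    rw [F, show m+2*0 = m by omega]
    exact mul_pos (NN_pos m m) (gmm_eval m y)
  positivity

end GaussLeg

open GaussLeg in
theorem transform_matrix_orthogonal_even (m n : ℕ) (hn : 0 < n) (x : Fin n → ℝ) (hmono : StrictMono x)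
    (hzero : ∀ j, x j ∈ Set.Ioo (0 : ℝ) 1 ∧ nalf m (m + 2 * n) (x j) = 0)
    (hall : ∀ y ∈ Set.Ioo (0 : ℝ) 1, nalf m (m + 2 * n) y = 0 → ∃ j, y = x j)
    (rho : Fin n → ℝ)
    (hrho : ∀ j, rho j = 2 * (2 * m + 4 * n + 1) /
      ((1 - x j ^ 2) * (deriv (nalf m (m + 2 * n)) (x j)) ^ 2)) :
    (Matrix.of fun i j : Fin n => Real.sqrt (rho i) * nalf m (m + 2 * (j : ℕ)) (x i))ᵀ *
      (Matrix.of fun i j : Fin n => Real.sqrt (rho i) * nalf m (m + 2 * (j : ℕ)) (x i)) = 1 := by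
  obtain ⟨N, rfl⟩ : ∃ N, n = N + 1 := ⟨n - 1, by omega⟩
  clear hn hall
  set w : Fin (N+1) → ℝ := fun i => (1 - x i ^ 2) ^ ((m:ℝ)/2) with hw_def
  have hx0 : ∀ i, 0 < x i := fun i => (hzero i).1.1
  have hx1 : ∀ i, x i < 1 := fun i => (hzero i).1.2
  have hxs : ∀ i, 0 < 1 - x i ^ 2 := by
    intro i
    nlinarith [hx0 i, hx1 i]
  have hw : ∀ i, 0 < w i := fun i => Real.rpow_pos_of_pos (hxs i) _
  have hterm : ∀ (j : ℕ) (y : ℝ), nalf m (m + 2 * j) y = (1 - y^2) ^ ((m:ℝ)/2) * F m j y := by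
    intro j y
    rw [nalf_eq, F]
    ring
  have hgz : ∀ i, Polynomial.eval (x i) (g m (m + 2*(N+1))) = 0 := by
    intro i
    have h := (hzero i).2
    rw [show m + 2*(N+1) = m + 2*(N+1) from rfl] at h
    rw [hterm (N+1) (x i)] at h
    rcases mul_eq_zero.mp h with h' | h'
    · exact absurd h' (ne_of_gt (hw i))
    · rw [F] at h'
      rcases mul_eq_zero.mp h' with h'' | h''
      · exact absurd h'' (ne_of_gt (NN_pos _ _))
      · exact h''
  have hFz : ∀ i, F m (N+1) (x i) = 0 := by
    intro i
    rw [F, hgz i, mul_zero]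
  rw [mul_eq_one_comm]
  ext i k
  rw [Matrix.mul_apply, Matrix.one_apply]
  simp only [Matrix.transpose_apply, Matrix.of_apply]
  have hsum : ∑ j : Fin (N+1), (Real.sqrt (rho i) * nalf m (m + 2 * (j:ℕ)) (x i))
        * (Real.sqrt (rho k) * nalf m (m + 2 * (j:ℕ)) (x k))
      = Real.sqrt (rho i) * Real.sqrt (rho k) * (w i * w k) *
        ∑ j ∈ Finset.range (N+1), F m j (x i) * F m j (x k) := by
    rw [Finset.mul_sum]
    rw [← Fin.sum_univ_eq_sum_range
      (fun j => Real.sqrt (rho i) * Real.sqrt (rho k) * (w i * w k) * (F m j (x i) * F m j (x k)))]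
    apply Finset.sum_congr rfl
    intro j _
    rw [hterm, hterm]
    ring
  rw [hsum]
  by_cases hik : i = k
  · subst hik
    rw [if_pos rfl]
    have hSQ : ∑ j ∈ Finset.range (N+1), F m j (x i) * F m j (x i)
        = ∑ j ∈ Finset.range (N+1), F m j (x i) ^ 2 := by
      apply Finset.sum_congr rfl
      intro j _
      ring
    rw [hSQ]
    set S := ∑ j ∈ Finset.range (N+1), F m j (x i) ^ 2 with hS_def
    have hSpos : 0 < S := by
      have h1 : F m 0 (x i) ^ 2 ≤ S := by
        apply Finset.single_le_sum (f := fun j => F m j (x i) ^ 2)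
        · intro j _
          positivity
        · exact Finset.mem_range.mpr (by omega)
      have := F0_sq_pos m (x i)
      linarith
    have hCDc := CDc m N (x i)
    rw [hFz i] at hCDc
    have hBP := BPe m N (x i) (hFz i)
    have hkey : (1 - x i ^ 2) * (F' m (N+1) (x i)) ^ 2 = 2 * (2*(m:ℝ)+4*(N:ℝ)+5) * S := by
      have h5 : x i * ((1 - x i ^ 2) * (F' m (N+1) (x i)) ^ 2 - 2 * (2*(m:ℝ)+4*(N:ℝ)+5) * S) = 0 := by
        linear_combination F' m (N+1) (x i) * hBP - (2*(m:ℝ)+4*(N:ℝ)+5) * hCDc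
      rcases mul_eq_zero.mp h5 with h' | h'
      · exact absurd h' (ne_of_gt (hx0 i))
      · linarith [sub_eq_zero.mp h']
    have hF'sq : 0 < (F' m (N+1) (x i)) ^ 2 := by
      nlinarith [hxs i, hSpos]
    have hderiv : deriv (nalf m (m + 2*(N+1))) (x i) = w i * F' m (N+1) (x i) := by
      rw [nalf_deriv m (m + 2*(N+1)) (x i) (hzero i).1 (hgz i), F']
    have hrhoi := hrho i
    rw [hderiv] at hrhoi
    have hwF : 0 < (w i * F' m (N+1) (x i)) ^ 2 := by
      have h3 : (w i * F' m (N+1) (x i)) ^ 2 = (w i)^2 * (F' m (N+1) (x i))^2 := by ring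
      rw [h3]
      exact mul_pos (pow_pos (hw i) 2) hF'sq
    have hden : (1 - x i ^ 2) * (w i * F' m (N+1) (x i)) ^ 2 ≠ 0 :=
      ne_of_gt (mul_pos (hxs i) hwF)
    have hrnn : 0 ≤ rho i := by
      rw [hrhoi]
      apply div_nonneg (by positivity) (le_of_lt (mul_pos (hxs i) hwF))
    rw [Real.mul_self_sqrt hrnn, hrhoi, div_mul_eq_mul_div, div_mul_eq_mul_div,
      div_eq_one_iff_eq hden]
    push_cast
    linear_combination -(w i)^2 * hkey
  · rw [if_neg hik]
    have hne : x i ^ 2 - x k ^ 2 ≠ 0 := by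
      intro h
      apply hmono.injective.ne hik
      nlinarith [hx0 i, hx0 k]
    have hcd := CD2 m N (x i) (x k)
    rw [hFz i, hFz k] at hcd
    have hz2 : (x i ^ 2 - x k ^ 2) * ∑ j ∈ Finset.range (N+1), F m j (x i) * F m j (x k) = 0 := by
      rw [hcd]
      ring
    rcases mul_eq_zero.mp hz2 with h' | h'
    · exact absurd h' hne
    · rw [h', mul_zero]
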